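/- Let T be a linear transformation of a finite-dimensional real vector space W, and assume W splits as a direct sum of eigenspaces for T with all eigenvalues different from ±1. Let W⁺, W⁻ ⊆ W be subspaces whose dimensions sum to dim W, such that W⁺ has zero intersection with the contracting subspace of T and W⁻ has zero intersection with the expanding subspace of T. Then there exists K ≥ 0 such that whenever k⁺, k⁻ are nonnegative integers with k⁺ + k⁻ ≥ K, one has the direct sum decomposition W = T^{k⁺} W⁺ ⊕ T^{-k⁻} W⁻. -/

import Mathlib

set_option maxHeartbeats 1000000
open Module Submodule Function

noncomputable def coordProj {ι : Type*} (P : ι → Prop) [DecidablePred P] :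
    (ι → ℝ) →ₗ[ℝ] (ι → ℝ) where
  toFun x i := if P i then x i else 0
  map_add' x y := by ext i; by_cases h : P i <;> simp [h]
  map_smul' c x := by ext i; by_cases h : P i <;> simp [h]

lemma coordProj_apply {ι : Type*} (P : ι → Prop) [DecidablePred P] (x : ι → ℝ) (i : ι) :
    coordProj P x i = if P i then x i else 0 := rfl

lemma aux_bound {U V : Type*} [AddCommGroup U] [Module ℝ U] [NormedAddCommGroup V]
    [NormedSpace ℝ V] [FiniteDimensional ℝ V] (Φ Ψ : U →ₗ[ℝ] V)
    (h : Function.Injective Φ) : ∃ M : ℝ, 0 ≤ M ∧ ∀ w, ‖Ψ w‖ ≤ M * ‖Φ w‖ := by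
  obtain ⟨g, hg⟩ := Φ.exists_leftInverse_of_injective (LinearMap.ker_eq_bot.mpr h)
  set L := LinearMap.toContinuousLinearMap (Ψ.comp g) with hL
  refine ⟨‖L‖, norm_nonneg _, fun w => ?_⟩
  have h1 : g (Φ w) = w := LinearMap.congr_fun hg w
  have h2 : Ψ w = L (Φ w) := by
    rw [hL]; simp [LinearMap.coe_toContinuousLinearMap', h1]
  rw [h2]; exact L.le_opNorm _

lemma core_vanish {W : Type*} [AddCommGroup W] [Module ℝ W] {ι : Type*} [Fintype ι]
    (b : Basis ι ℝ W) (Tf : W →ₗ[ℝ] W) (μ : ι → ℝ) (hμ : ∀ i, |μ i| ≠ 1)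
    (hTb : ∀ i, Tf (b i) = μ i • b i)
    (Wp Wm : Submodule ℝ W)
    (hWp0 : ∀ y ∈ Wp, (∀ i, ¬|μ i| < 1 → b.equivFun y i = 0) → y = 0)
    (hWm0 : ∀ z ∈ Wm, (∀ i, |μ i| < 1 → b.equivFun z i = 0) → z = 0) :
    ∃ K : ℕ, ∀ n, K ≤ n → ∀ y ∈ Wp, (Tf ^ n) y ∈ Wm → y = 0 := by
  classical
  -- coordinate action of powers of Tf
  have hcn : ∀ (n : ℕ) (y : W) (i : ι),
      b.equivFun ((Tf ^ n) y) i = μ i ^ n * b.equivFun y i := by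
    have hc : ∀ (y : W) (i : ι), b.equivFun (Tf y) i = μ i * b.equivFun y i := by
      intro y i
      have h1 : Tf y = ∑ j, (b.equivFun y j * μ j) • b j := by
        conv_lhs => rw [← b.sum_equivFun y]
        rw [map_sum]
        refine Finset.sum_congr rfl fun j _ => ?_
        rw [map_smul, hTb j, smul_smul]
      rw [h1, Basis.equivFun_apply, b.repr_sum_self]; ring
    intro n
    induction n with
    | zero => intro y i; simp
    | succ n ih =>
      intro y i
      rw [pow_succ, Module.End.mul_apply, ih (Tf y) i, hc y i, pow_succ]; ring
  set c : W →ₗ[ℝ] (ι → ℝ) := b.equivFun.toLinearMap with hcdef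
  set P : ι → Prop := fun i => |μ i| < 1 with hP
  set πm : (ι → ℝ) →ₗ[ℝ] (ι → ℝ) := coordProj P with hπm
  set πp : (ι → ℝ) →ₗ[ℝ] (ι → ℝ) := coordProj (fun i => ¬ P i) with hπp
  -- the bounded "graph" estimates
  have hinjp : Function.Injective (πp ∘ₗ (c ∘ₗ Wp.subtype)) := by
    rw [← LinearMap.ker_eq_bot, eq_bot_iff]
    intro w hw
    rw [LinearMap.mem_ker] at hw
    have hw' : ∀ i, ¬ P i → b.equivFun (w : W) i = 0 := by
      intro i hi
      have := congr_fun hw i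
      simpa [hπp, coordProj_apply, hi, hcdef] using this
    have : (w : W) = 0 := hWp0 w w.2 hw'
    simpa using Subtype.ext this
  have hinjm : Function.Injective (πm ∘ₗ (c ∘ₗ Wm.subtype)) := by
    rw [← LinearMap.ker_eq_bot, eq_bot_iff]
    intro w hw
    rw [LinearMap.mem_ker] at hw
    have hw' : ∀ i, P i → b.equivFun (w : W) i = 0 := by
      intro i hi
      have := congr_fun hw i
      simpa [hπm, coordProj_apply, hi, hcdef] using this
    have : (w : W) = 0 := hWm0 w w.2 hw'
    simpa using Subtype.ext this
  obtain ⟨Ma, hMa0, hMa⟩ := aux_bound (πp ∘ₗ (c ∘ₗ Wp.subtype)) (πm ∘ₗ (c ∘ₗ Wp.subtype)) hinjp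
  obtain ⟨Mb, hMb0, hMb⟩ := aux_bound (πm ∘ₗ (c ∘ₗ Wm.subtype)) (πp ∘ₗ (c ∘ₗ Wm.subtype)) hinjm
  -- contraction / expansion rates
  set r : ℝ := (Finset.univ.filter (fun i : ι => |μ i| < 1)).fold max (1/2 : ℝ) (fun i => |μ i|)
    with hrdef
  set R : ℝ := (Finset.univ.filter (fun i : ι => ¬ |μ i| < 1)).fold min (2 : ℝ) (fun i => |μ i|)
    with hRdef
  have hr0 : (0 : ℝ) ≤ r := (Finset.le_fold_max _).mpr (Or.inl (by norm_num))
  have hr1 : r < 1 :=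
    (Finset.fold_max_lt _).mpr ⟨by norm_num, fun i hi => (Finset.mem_filter.mp hi).2⟩
  have hri : ∀ i, |μ i| < 1 → |μ i| ≤ r := fun i h =>
    (Finset.le_fold_max _).mpr (Or.inr ⟨i, Finset.mem_filter.mpr ⟨Finset.mem_univ i, h⟩, le_refl _⟩)
  have hR1 : (1 : ℝ) < R := (Finset.lt_fold_min _).mpr
    ⟨by norm_num, fun i hi =>
      lt_of_le_of_ne (not_lt.mp (Finset.mem_filter.mp hi).2) (Ne.symm (hμ i))⟩
  have hRi : ∀ i, ¬ |μ i| < 1 → R ≤ |μ i| := fun i h =>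
    (Finset.fold_min_le _).mpr (Or.inr ⟨i, Finset.mem_filter.mpr ⟨Finset.mem_univ i, h⟩, le_refl _⟩)
  have hR0 : (0 : ℝ) < R := zero_lt_one.trans hR1
  set q : ℝ := r / R with hqdef
  have hq0 : 0 ≤ q := div_nonneg hr0 hR0.le
  have hq1 : q < 1 := (div_lt_one hR0).mpr (hr1.trans hR1)
  obtain ⟨K, hK⟩ := exists_pow_lt_of_lt_one
    (show (0:ℝ) < 1/(Ma*Mb+1) by positivity) hq1
  refine ⟨K, fun n hn y hy hTy => ?_⟩
  set x : ι → ℝ := c y with hx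
  set u : ι → ℝ := πp x with hu
  set w : ι → ℝ := πm x with hw
  set z : ι → ℝ := c ((Tf ^ n) y) with hz
  have hzi : ∀ i, z i = μ i ^ n * x i := fun i => hcn n y i
  have hzp : πp z = fun i => μ i ^ n * u i := by
    ext i
    by_cases hi : P i <;>
      simp [hπp, coordProj_apply, hi, hzi i, hu]
  have hzm : πm z = fun i => μ i ^ n * w i := by
    ext i
    by_cases hi : P i <;>
      simp [hπm, coordProj_apply, hi, hzi i, hw]
  -- estimate 1 : expansion
  have h1 : R ^ n * ‖u‖ ≤ ‖πp z‖ := by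
    have hub : ‖u‖ ≤ ‖πp z‖ / R ^ n := by
      rw [pi_norm_le_iff_of_nonneg (by positivity)]
      intro i
      by_cases hi : P i
      · simp [hu, hπp, coordProj_apply, hi]
        positivity
      · have h2 : R ^ n * ‖u i‖ ≤ ‖πp z i‖ := by
          rw [hzp]
          simp only [Real.norm_eq_abs, abs_mul, abs_pow]
          exact mul_le_mul_of_nonneg_right (pow_le_pow_left₀ hR0.le (hRi i hi) n) (abs_nonneg _)
        have h3 : ‖πp z i‖ ≤ ‖πp z‖ := norm_le_pi_norm _ i
        rw [le_div_iff₀ (by positivity)]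
        nlinarith [norm_nonneg (πp z)]
    rw [le_div_iff₀ (by positivity)] at hub
    linarith
  -- estimate 2 : contraction
  have h3 : ‖πm z‖ ≤ r ^ n * ‖w‖ := by
    rw [pi_norm_le_iff_of_nonneg (by positivity)]
    intro i
    by_cases hi : P i
    · rw [hzm]
      simp only [Real.norm_eq_abs, abs_mul, abs_pow]
      have := norm_le_pi_norm w i
      simp only [Real.norm_eq_abs] at this
      have h4 : |μ i| ^ n ≤ r ^ n := pow_le_pow_left₀ (abs_nonneg _) (hri i hi) n
      exact mul_le_mul h4 this (abs_nonneg _) (pow_nonneg hr0 n)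
    · have : w i = 0 := by simp [hw, hπm, coordProj_apply, hi]
      rw [hzm]; simp [this]
      positivity
  -- the graph bounds
  have h4 : ‖w‖ ≤ Ma * ‖u‖ := by
    have := hMa ⟨y, hy⟩
    simpa [hcdef, hu, hw, hx] using this
  have h2 : ‖πp z‖ ≤ Mb * ‖πm z‖ := by
    have := hMb ⟨(Tf ^ n) y, hTy⟩
    simpa [hcdef, hz] using this
  -- conclude
  have hqn : q ^ n < 1 / (Ma * Mb + 1) :=
    lt_of_le_of_lt (pow_le_pow_of_le_one hq0 hq1.le hn) hK
  have hrn : r ^ n = q ^ n * R ^ n := by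
    rw [hqdef, div_pow, div_mul_cancel₀]
    positivity
  have hun : ‖u‖ = 0 := by
    by_contra h
    have hupos : 0 < ‖u‖ := lt_of_le_of_ne (norm_nonneg u) (Ne.symm h)
    have hchain : R ^ n * ‖u‖ ≤ Ma * Mb * (q ^ n * R ^ n) * ‖u‖ := by
      calc R ^ n * ‖u‖ ≤ ‖πp z‖ := h1
        _ ≤ Mb * ‖πm z‖ := h2
        _ ≤ Mb * (r ^ n * ‖w‖) := mul_le_mul_of_nonneg_left h3 hMb0
        _ ≤ Mb * (r ^ n * (Ma * ‖u‖)) :=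
            mul_le_mul_of_nonneg_left
              (mul_le_mul_of_nonneg_left h4 (pow_nonneg hr0 n)) hMb0
        _ = Ma * Mb * (q ^ n * R ^ n) * ‖u‖ := by rw [← hrn]; ring
    have hlt : Ma * Mb * q ^ n < 1 := by
      rw [lt_div_iff₀ (by positivity : (0:ℝ) < Ma * Mb + 1)] at hqn
      have h6 : Ma * Mb * q ^ n ≤ (Ma * Mb + 1) * q ^ n :=
        mul_le_mul_of_nonneg_right (le_add_of_nonneg_right zero_le_one) (pow_nonneg hq0 n)
      calc Ma * Mb * q ^ n ≤ (Ma * Mb + 1) * q ^ n := h6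
        _ = q ^ n * (Ma * Mb + 1) := by ring
        _ < 1 := hqn
    have hpos : 0 < R ^ n * ‖u‖ := mul_pos (pow_pos hR0 n) hupos
    have h7 : Ma * Mb * (q ^ n * R ^ n) * ‖u‖ < R ^ n * ‖u‖ := by
      calc Ma * Mb * (q ^ n * R ^ n) * ‖u‖ = (Ma * Mb * q ^ n) * (R ^ n * ‖u‖) := by ring
        _ < 1 * (R ^ n * ‖u‖) := mul_lt_mul_of_pos_right hlt hpos
        _ = R ^ n * ‖u‖ := one_mul _
    linarith
  have : u = 0 := norm_eq_zero.mp hun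
  have hwn : w = 0 := by
    have : ‖w‖ ≤ 0 := by rw [hun] at h4; linarith
    exact norm_le_zero_iff.mp this
  have hx0 : x = 0 := by
    ext i
    by_cases hi : P i
    · have := congr_fun hwn i; simpa [hw, hπm, coordProj_apply, hi] using this
    · have := congr_fun this i; simpa [hu, hπp, coordProj_apply, hi] using this
  have : b.equivFun y = 0 := hx0
  simpa using b.equivFun.map_eq_zero_iff.mp this

/-- If `W` splits as a direct sum of eigenspaces of `T` with eigenvalues of absolute value `≠ 1`,
and `W⁺`, `W⁻` are subspaces with complementary dimensions meeting the contracting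
(resp. expanding) subspace only in `0`, then `W = T^{k⁺} W⁺ ⊕ T^{-k⁻} W⁻` whenever
`k⁺ + k⁻` is sufficiently large. -/
theorem unif_transverse
    (W : Type*) [AddCommGroup W] [Module ℝ W] [FiniteDimensional ℝ W]
    (T : W ≃ₗ[ℝ] W)
    (hdiag : (⨆ μ ∈ {μ : ℝ | |μ| ≠ 1},
        Module.End.eigenspace (T : W →ₗ[ℝ] W) μ) = ⊤)
    (Wp Wm : Submodule ℝ W)
    (hdim : Module.finrank ℝ Wp + Module.finrank ℝ Wm = Module.finrank ℝ W)
    (hWp : Wp ⊓ (⨆ μ ∈ {μ : ℝ | |μ| < 1},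
        Module.End.eigenspace (T : W →ₗ[ℝ] W) μ) = ⊥)
    (hWm : Wm ⊓ (⨆ μ ∈ {μ : ℝ | 1 < |μ|},
        Module.End.eigenspace (T : W →ₗ[ℝ] W) μ) = ⊥) :
    ∃ K : ℕ, ∀ kp km : ℕ, K ≤ kp + km →
      IsCompl (Submodule.map ((T : W →ₗ[ℝ] W) ^ kp) Wp)
              (Submodule.map ((T.symm : W →ₗ[ℝ] W) ^ km) Wm) := by
  classical
  set Tf : W →ₗ[ℝ] W := (T : W →ₗ[ℝ] W) with hTf
  set Tg : W →ₗ[ℝ] W := (T.symm : W →ₗ[ℝ] W) with hTg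
  -- an eigenbasis
  set S : Set ℝ := {μ : ℝ | |μ| ≠ 1} with hS
  set f : S → Submodule ℝ W := fun s => Module.End.eigenspace Tf s.val with hf
  have hind : iSupIndep f := (Module.End.eigenspaces_iSupIndep Tf).comp Subtype.val_injective
  have hsup : iSup f = ⊤ := by
    rw [← hdiag]
    exact iSup_subtype'' S (fun μ => Module.End.eigenspace Tf μ)
  have hint : DirectSum.IsInternal f :=
    DirectSum.isInternal_submodule_of_iSupIndep_of_iSup_eq_top hind hsup
  set v : ∀ s : S, Basis (Fin (finrank ℝ (f s))) ℝ (f s) := fun s => Module.finBasis ℝ (f s)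
    with hv
  set b := hint.collectedBasis v with hb
  haveI : Fintype ((s : S) × Fin (finrank ℝ (f s))) := FiniteDimensional.fintypeBasisIndex b
  set μ : ((s : S) × Fin (finrank ℝ (f s))) → ℝ := fun i => i.1.val with hμdef
  have hμ : ∀ i, |μ i| ≠ 1 := fun i => i.1.2
  have hTb : ∀ i, Tf (b i) = μ i • b i := fun i =>
    Module.End.mem_eigenspace_iff.mp (hint.collectedBasis_mem v i)
  have hbe : ∀ i, b i ∈ Module.End.eigenspace Tf (μ i) := fun i => hint.collectedBasis_mem v i
  -- translate the transversality hypotheses into coordinate form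
  have hWp0 : ∀ y ∈ Wp, (∀ i, ¬|μ i| < 1 → b.equivFun y i = 0) → y = 0 := by
    intro y hy h0
    have hmem : (∑ i, b.equivFun y i • b i) ∈
        (⨆ ν ∈ {ν : ℝ | |ν| < 1}, Module.End.eigenspace Tf ν) := by
      refine Submodule.sum_mem _ fun i _ => ?_
      by_cases hi : |μ i| < 1
      · exact Submodule.smul_mem _ _
          (le_iSup₂ (f := fun ν (_ : ν ∈ {ν : ℝ | |ν| < 1}) => Module.End.eigenspace Tf ν)
            (μ i) hi (hbe i))
      · rw [h0 i hi, zero_smul]; exact zero_mem _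
    rw [b.sum_equivFun y] at hmem
    have : y ∈ Wp ⊓ (⨆ ν ∈ {ν : ℝ | |ν| < 1}, Module.End.eigenspace Tf ν) := ⟨hy, hmem⟩
    rw [hWp] at this
    simpa using this
  have hWm0 : ∀ z ∈ Wm, (∀ i, |μ i| < 1 → b.equivFun z i = 0) → z = 0 := by
    intro z hz h0
    have hmem : (∑ i, b.equivFun z i • b i) ∈
        (⨆ ν ∈ {ν : ℝ | 1 < |ν|}, Module.End.eigenspace Tf ν) := by
      refine Submodule.sum_mem _ fun i _ => ?_
      by_cases hi : |μ i| < 1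
      · rw [h0 i hi, zero_smul]; exact zero_mem _
      · have hi' : 1 < |μ i| := lt_of_le_of_ne (not_lt.mp hi) (Ne.symm (hμ i))
        exact Submodule.smul_mem _ _
          (le_iSup₂ (f := fun ν (_ : ν ∈ {ν : ℝ | 1 < |ν|}) => Module.End.eigenspace Tf ν)
            (μ i) hi' (hbe i))
    rw [b.sum_equivFun z] at hmem
    have : z ∈ Wm ⊓ (⨆ ν ∈ {ν : ℝ | 1 < |ν|}, Module.End.eigenspace Tf ν) := ⟨hz, hmem⟩
    rw [hWm] at this
    simpa using this
  obtain ⟨K, hK⟩ := core_vanish b Tf μ hμ hTb Wp Wm hWp0 hWm0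
  refine ⟨K, fun kp km hn => ?_⟩
  -- injectivity of the powers
  have hinjT : Function.Injective ⇑Tf := by
    rw [hTf]; exact T.injective
  have hinjS : Function.Injective ⇑Tg := by
    rw [hTg]; exact T.symm.injective
  have hinj : ∀ m : ℕ, Function.Injective ⇑(Tf ^ m) := fun m => by
    rw [Module.End.coe_pow]; exact hinjT.iterate m
  have hinj' : ∀ m : ℕ, Function.Injective ⇑(Tg ^ m) := fun m => by
    rw [Module.End.coe_pow]; exact hinjS.iterate m
  -- Tf^k is a left inverse of Tg^k
  have hcomp : ∀ (k : ℕ) (w : W), (Tf ^ k) ((Tg ^ k) w) = w := by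
    intro k
    induction k with
    | zero => intro w'; simp
    | succ k ih =>
      intro w'
      rw [pow_succ, pow_succ' Tg, Module.End.mul_apply, Module.End.mul_apply]
      have h1 : ∀ a : W, Tf (Tg a) = a := by
        intro a; rw [hTf, hTg]; exact T.apply_symm_apply a
      rw [h1, ih w']
  -- disjointness
  have hdisj : Disjoint (Submodule.map (Tf ^ kp) Wp) (Submodule.map (Tg ^ km) Wm) := by
    rw [Submodule.disjoint_def]
    intro x hxp hxm
    obtain ⟨y, hy, hyx⟩ := Submodule.mem_map.mp hxp
    obtain ⟨z, hz, hzx⟩ := Submodule.mem_map.mp hxm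
    have hfz : (Tf ^ (kp + km)) y = z := by
      calc (Tf ^ (kp + km)) y = (Tf ^ km) ((Tf ^ kp) y) := by
            rw [add_comm kp km, pow_add, Module.End.mul_apply]
        _ = (Tf ^ km) x := by rw [hyx]
        _ = (Tf ^ km) ((Tg ^ km) z) := by rw [← hzx]
        _ = z := hcomp km z
    have hy0 : y = 0 := hK (kp + km) hn y hy (hfz ▸ hz)
    rw [← hyx, hy0, map_zero]
  -- complementary dimensions
  have hrk1 : finrank ℝ (Submodule.map (Tf ^ kp) Wp) = finrank ℝ Wp :=
    (LinearEquiv.finrank_eq (Submodule.equivMapOfInjective (Tf ^ kp) (hinj kp) Wp)).symm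
  have hrk2 : finrank ℝ (Submodule.map (Tg ^ km) Wm) = finrank ℝ Wm :=
    (LinearEquiv.finrank_eq (Submodule.equivMapOfInjective (Tg ^ km) (hinj' km) Wm)).symm
  refine ⟨hdisj, codisjoint_iff.mpr ?_⟩
  apply Submodule.eq_top_of_disjoint _ _ _ hdisj
  rw [hrk1, hrk2, hdim]
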